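/- In the Hecke algebra H_{n,q}, the element y_n := ([n]_{1/q}!)⁻¹ · Σ_{w ∈ S_n} (-q)^{-ℓ(w)} T_w is an idempotent, provided q is invertible and [n]_{1/q}! is invertible in K. -/

import Mathlib

/-- The Coxeter length of a permutation of `Fin n` (its number of inversions). -/
def permLen {n : ℕ} (w : Equiv.Perm (Fin n)) : ℕ :=
  (Finset.univ.filter fun p : Fin n × Fin n => p.1 < p.2 ∧ w p.2 < w p.1).card

/-- q-integer `[m]_q = 1 + q + ⋯ + q^{m-1}`. -/
def qnat {K : Type*} [Semiring K] (q : K) (m : ℕ) : K := ∑ i ∈ Finset.range m, q ^ i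

/-- q-factorial `[m]_q! = [1]_q [2]_q ⋯ [m]_q`. -/
def qfact {K : Type*} [CommSemiring K] (q : K) (m : ℕ) : K :=
  ∏ i ∈ Finset.range m, qnat q (i + 1)

open Equiv Finset

lemma swap_adj_lt {n : ℕ} {i j p q : Fin n} (hij : (i:ℕ) + 1 = j) (hpq : p < q)
    (h : ¬(p = i ∧ q = j)) : Equiv.swap i j p < Equiv.swap i j q := by
  have hvals : ∀ x : Fin n, ((Equiv.swap i j x : Fin n) : ℕ) =
      if x = i then (j:ℕ) else if x = j then (i:ℕ) else (x:ℕ) := by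
    intro x
    rcases eq_or_ne x i with rfl | hxi
    · simp [Equiv.swap_apply_left]
    rcases eq_or_ne x j with rfl | hxj
    · simp [Equiv.swap_apply_right, hxi]
    · simp [Equiv.swap_apply_of_ne_of_ne hxi hxj, hxi, hxj]
  rw [Fin.lt_def, hvals, hvals]
  rw [Fin.lt_def] at hpq
  have hpi := Fin.val_eq_val p i
  have hpj := Fin.val_eq_val p j
  have hqi := Fin.val_eq_val q i
  have hqj := Fin.val_eq_val q j
  have h' : ¬((p:ℕ) = i ∧ (q:ℕ) = j) := by
    rintro ⟨h1, h2⟩; exact h ⟨hpi.mp h1, hqj.mp h2⟩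
  split_ifs with h1 h2 h3 h4 h5 h6 h7 <;>
    simp_all <;> omega

lemma permLen_mul_swap_of_lt {n : ℕ} {i j : Fin n} (hij : (i:ℕ) + 1 = j)
    {w : Equiv.Perm (Fin n)} (h : w i < w j) :
    permLen (w * Equiv.swap i j) = permLen w + 1 := by
  classical
  set s := Equiv.swap i j with hs
  have hss : ∀ x, s (s x) = x := fun x => Equiv.swap_apply_self i j x
  have hij' : i < j := by rw [Fin.lt_def]; omega
  have hset : (Finset.univ.filter fun p : Fin n × Fin n => p.1 < p.2 ∧ (w*s) p.2 < (w*s) p.1)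
      = insert (i,j) ((Finset.univ.filter fun p : Fin n × Fin n => p.1 < p.2 ∧ w p.2 < w p.1).image
          (Prod.map s s)) := by
    ext ⟨p, q⟩
    simp only [mem_filter, mem_univ, true_and, mem_insert, mem_image, Prod.mk.injEq,
      Prod.map, Prod.exists]
    constructor
    · rintro ⟨hpq, hlt⟩
      by_cases hpij : p = i ∧ q = j
      · left; exact ⟨hpij.1, hpij.2⟩
      · right
        refine ⟨s p, s q, ⟨swap_adj_lt hij hpq hpij, ?_⟩, hss p, hss q⟩
        simpa [Equiv.Perm.mul_apply] using hlt
    · rintro (⟨rfl, rfl⟩ | ⟨a, b, ⟨hab, hba⟩, rfl, rfl⟩)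
      · refine ⟨hij', ?_⟩
        simpa [Equiv.Perm.mul_apply, hs, Equiv.swap_apply_left, Equiv.swap_apply_right] using h
      · have hne : ¬(a = i ∧ b = j) := by
          rintro ⟨rfl, rfl⟩; exact absurd hba (not_lt.mpr h.le)
        refine ⟨swap_adj_lt hij hab hne, ?_⟩
        simpa [Equiv.Perm.mul_apply, hss] using hba
  rw [permLen, hset, Finset.card_insert_of_notMem, Finset.card_image_of_injective _
      (s.injective.prodMap s.injective), permLen]
  · rintro hmem
    rw [mem_image] at hmem
    obtain ⟨⟨a, b⟩, hab, habe⟩ := hmem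
    rw [mem_filter] at hab
    simp only [Prod.map, Prod.mk.injEq] at habe
    have ha : a = j := by
      have := habe.1; rw [← hss a, this, hs, Equiv.swap_apply_left]
    have hb : b = i := by
      have := habe.2; rw [← hss b, this, hs, Equiv.swap_apply_right]
    rw [ha, hb] at hab
    exact absurd hab.2.1 (not_lt.mpr hij'.le)

lemma permLen_mul_swap_of_gt {n : ℕ} {i j : Fin n} (hij : (i:ℕ) + 1 = j)
    {w : Equiv.Perm (Fin n)} (h : w j < w i) :
    permLen w = permLen (w * Equiv.swap i j) + 1 := by
  have h2 : (w * Equiv.swap i j) i < (w * Equiv.swap i j) j := by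
    simpa [Equiv.Perm.mul_apply, Equiv.swap_apply_left, Equiv.swap_apply_right] using h
  have := permLen_mul_swap_of_lt hij h2
  rwa [mul_assoc, Equiv.swap_mul_self, mul_one] at this

lemma permLen_one {n : ℕ} : permLen (1 : Equiv.Perm (Fin n)) = 0 := by
  rw [permLen, Finset.card_eq_zero]
  ext ⟨p, q⟩
  simp only [mem_filter, mem_univ, true_and, Equiv.Perm.one_apply, notMem_empty, iff_false]
  intro hm; obtain ⟨-, h1, h2⟩ := Finset.mem_filter.mp hm; exact absurd h2 (not_lt.mpr h1.le)

lemma exists_descent {n : ℕ} {w : Equiv.Perm (Fin n)} (h : w ≠ 1) :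
    ∃ i j : Fin n, (i:ℕ) + 1 = j ∧ w j < w i := by
  by_contra hc
  push_neg at hc
  have hasc : ∀ i j : Fin n, (i:ℕ) + 1 = j → w i < w j := by
    intro i j hij
    rcases lt_trichotomy (w i) (w j) with h1 | h1 | h1
    · exact h1
    · exact absurd (w.injective h1) (by intro he; rw [he] at hij; omega)
    · exact absurd h1 (not_lt.mpr (hc i j hij))
  have hmono : StrictMono w := by
    have : ∀ d : ℕ, ∀ a b : Fin n, (b:ℕ) = (a:ℕ) + d + 1 → w a < w b := by
      intro d
      induction d with
      | zero => intro a b hab; exact hasc a b (by omega)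
      | succ d ih =>
        intro a b hab
        have hlt : (a:ℕ) + 1 < n := by have := b.isLt; omega
        set m : Fin n := ⟨(a:ℕ)+1, hlt⟩
        exact (hasc a m rfl).trans (ih m b (by simp [m]; omega))
    intro a b hab
    rw [Fin.lt_def] at hab
    exact this ((b:ℕ) - (a:ℕ) - 1) a b (by omega)
  apply h
  have hle : ∀ a : Fin n, a ≤ w a := by
    have key : ∀ m : ℕ, ∀ a : Fin n, (a:ℕ) ≤ m → a ≤ w a := by
      intro m
      induction m with
      | zero => intro a ha; rw [Fin.le_def]; omega
      | succ m ih =>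
        intro a ha
        by_contra hcon
        push_neg at hcon
        have h1 : w (w a) < w a := hmono hcon
        have h2 : w a ≤ w (w a) := ih (w a) (by rw [Fin.lt_def] at hcon; omega)
        exact absurd h1 (not_lt.mpr h2)
    exact fun a => key n a a.isLt.le
  have hsum : ∑ a : Fin n, (w a : ℕ) = ∑ a : Fin n, (a : ℕ) :=
    Equiv.sum_comp w (fun a => (a : ℕ))
  have : ∀ a : Fin n, (w a : ℕ) = (a : ℕ) := by
    intro a
    have := (Finset.sum_eq_sum_iff_of_le (s := (univ : Finset (Fin n)))
      (f := fun a => (a:ℕ)) (g := fun a => (w a : ℕ)) (fun i _ => hle i)).mp hsum.symm a (mem_univ a)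
    omega
  ext a
  simpa using (this a)

def psi {n : ℕ} (k : Fin (n+1)) (e : Equiv.Perm (Fin n)) : Equiv.Perm (Fin (n+1)) :=
  (finSuccEquiv' (Fin.last n)).trans ((Equiv.optionCongr e).trans (finSuccEquiv' k).symm)

lemma psi_last {n : ℕ} (k : Fin (n+1)) (e : Equiv.Perm (Fin n)) :
    psi k e (Fin.last n) = k := by
  simp [psi, finSuccEquiv'_at, finSuccEquiv'_symm_none]

lemma psi_castSucc {n : ℕ} (k : Fin (n+1)) (e : Equiv.Perm (Fin n)) (x : Fin n) :
    psi k e (Fin.castSucc x) = k.succAbove (e x) := by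
  have h1 : finSuccEquiv' (Fin.last n) (Fin.castSucc x) = some x := by
    rw [← Fin.succAbove_last_apply, finSuccEquiv'_succAbove]
  simp [psi, h1, finSuccEquiv'_symm_some]

lemma lt_succAbove_iff' {n : ℕ} (k : Fin (n+1)) (v : Fin n) :
    k < k.succAbove v ↔ (k:ℕ) ≤ (v:ℕ) := by
  rcases lt_or_ge ((v:ℕ)) ((k:ℕ)) with h | h
  · rw [Fin.succAbove_of_castSucc_lt _ _ (by rwa [Fin.lt_def])]
    simp only [Fin.lt_def, Fin.coe_castSucc]; omega
  · rw [Fin.succAbove_of_le_castSucc _ _ (by rwa [Fin.le_def])]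
    simp only [Fin.lt_def, Fin.val_succ]; omega

lemma card_ge_filter {n : ℕ} (k : Fin (n+1)) :
    ((Finset.univ.filter fun z : Fin n => (k:ℕ) ≤ (z:ℕ))).card = n - (k:ℕ) := by
  rw [← Nat.card_Ico (k:ℕ) n]
  apply Finset.card_nbij (i := Fin.val)
  · intro a ha
    simp only [mem_coe, mem_filter, mem_univ, true_and] at ha
    simp [Finset.mem_Ico, ha, a.isLt]
  · exact fun a _ b _ hab => Fin.val_injective hab
  · intro m hm
    simp only [Finset.coe_Ico, Set.mem_Ico] at hm
    exact ⟨⟨m, hm.2⟩, by simp [hm.1], rfl⟩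

lemma permLen_psi {n : ℕ} (k : Fin (n+1)) (e : Equiv.Perm (Fin n)) :
    permLen (psi k e) = (n - (k:ℕ)) + permLen e := by
  classical
  set w := psi k e with hw
  set D : Finset (Fin n) := Finset.univ.filter fun x => (k:ℕ) ≤ ((e x : Fin n):ℕ) with hD
  have hset : (Finset.univ.filter fun p : Fin (n+1) × Fin (n+1) => p.1 < p.2 ∧ w p.2 < w p.1)
      = ((Finset.univ.filter fun p : Fin n × Fin n => p.1 < p.2 ∧ e p.2 < e p.1).image
          (Prod.map Fin.castSucc Fin.castSucc))
        ∪ (D.image fun x => (Fin.castSucc x, Fin.last n)) := by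
    ext ⟨p, q⟩
    simp only [mem_filter, mem_univ, true_and, mem_union, mem_image, Prod.mk.injEq,
      Prod.map, Prod.exists]
    constructor
    · rintro ⟨hpq, hlt⟩
      rcases eq_or_ne q (Fin.last n) with rfl | hq
      · right
        obtain ⟨x, rfl⟩ := Fin.exists_castSucc_eq.mpr (Fin.lt_last_iff_ne_last.mp hpq)
        rw [psi_last, psi_castSucc] at hlt
        exact ⟨x, by simp [hD, (lt_succAbove_iff' k (e x)).mp hlt], rfl, rfl⟩
      · left
        obtain ⟨y, rfl⟩ := Fin.exists_castSucc_eq.mpr hq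
        obtain ⟨x, rfl⟩ := Fin.exists_castSucc_eq.mpr
          (Fin.lt_last_iff_ne_last.mp (hpq.trans (Fin.castSucc_lt_last y)))
        rw [psi_castSucc, psi_castSucc] at hlt
        exact ⟨x, y, ⟨Fin.castSucc_lt_castSucc_iff.mp hpq,
          Fin.succAbove_lt_succAbove_iff.mp hlt⟩, rfl, rfl⟩
    · rintro (⟨x, y, ⟨hxy, hlt⟩, rfl, rfl⟩ | ⟨x, hx, rfl, rfl⟩)
      · refine ⟨Fin.castSucc_lt_castSucc_iff.mpr hxy, ?_⟩
        rw [psi_castSucc, psi_castSucc]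
        exact Fin.succAbove_lt_succAbove_iff.mpr hlt
      · refine ⟨Fin.castSucc_lt_last x, ?_⟩
        rw [psi_last, psi_castSucc]
        simp only [hD, mem_filter, mem_univ, true_and] at hx
        exact (lt_succAbove_iff' k (e x)).mpr hx
  have hdisj : Disjoint
      ((Finset.univ.filter fun p : Fin n × Fin n => p.1 < p.2 ∧ e p.2 < e p.1).image
          (Prod.map Fin.castSucc Fin.castSucc))
      (D.image fun x => (Fin.castSucc x, Fin.last n)) := by
    rw [Finset.disjoint_left]
    rintro ⟨p, q⟩ h1 h2
    rw [mem_image] at h1 h2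
    obtain ⟨⟨x, y⟩, _, hxy⟩ := h1
    obtain ⟨z, _, hz⟩ := h2
    simp only [Prod.map, Prod.mk.injEq] at hxy hz
    have : Fin.castSucc y = Fin.last n := by rw [hxy.2, hz.2]
    exact absurd this (Fin.ne_of_lt (Fin.castSucc_lt_last y))
  have hinj : Function.Injective (Prod.map (Fin.castSucc (n := n)) Fin.castSucc) :=
    Fin.castSucc_injective n |>.prodMap (Fin.castSucc_injective n)
  have hinj2 : Function.Injective fun x : Fin n => (Fin.castSucc x, Fin.last n) := by
    intro a b hab
    exact Fin.castSucc_injective n (congrArg Prod.fst hab)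
  have hDcard : D.card = n - (k:ℕ) := by
    rw [← card_ge_filter k]
    apply Finset.card_nbij (i := fun x => e x)
    · intro a ha; simp only [hD, mem_coe, mem_filter, mem_univ, true_and] at ha ⊢; exact ha
    · exact fun a _ b _ hab => e.injective hab
    · intro z hz
      simp only [coe_filter, Set.mem_setOf_eq, mem_univ, true_and] at hz
      exact ⟨e.symm z, by simp [hD, hz], by simp⟩
  rw [permLen, hset, Finset.card_union_of_disjoint hdisj,
    Finset.card_image_of_injective _ hinj, Finset.card_image_of_injective _ hinj2,
    hDcard, permLen, Nat.add_comm]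

lemma poincare {K : Type*} [CommSemiring K] (x : K) :
    ∀ n : ℕ, ∑ w : Equiv.Perm (Fin n), x ^ permLen w = qfact x n := by
  intro n
  induction n with
  | zero =>
    rw [qfact, Finset.prod_range_zero]
    rw [Finset.sum_eq_single 1]
    · have : permLen (1 : Equiv.Perm (Fin 0)) = 0 := by
        simp [permLen]
      rw [this, pow_zero]
    · intro b _ hb; exact absurd (Subsingleton.elim b 1) hb
    · intro h; exact absurd (mem_univ _) h
  | succ n ih =>
    have hbij : Function.Bijective (fun p : Fin (n+1) × Equiv.Perm (Fin n) => psi p.1 p.2) := by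
      rw [Fintype.bijective_iff_injective_and_card]
      constructor
      · rintro ⟨k, e⟩ ⟨k', e'⟩ hpsi
        simp only at hpsi
        have hk : k = k' := by rw [← psi_last k e, ← psi_last k' e', hpsi]
        have he : e = e' := Equiv.ext fun x => by
          have h1 : psi k e (Fin.castSucc x) = psi k' e' (Fin.castSucc x) := by rw [hpsi]
          rw [psi_castSucc, psi_castSucc, ← hk] at h1
          exact Fin.succAbove_right_injective h1
        rw [hk, he]
      · simp [Fintype.card_perm, Nat.factorial_succ]
    rw [← Fintype.sum_bijective _ hbij _ (fun w => x ^ permLen w) (fun _ => rfl)]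
    have hsplit : ∀ (k : Fin (n+1)) (e : Equiv.Perm (Fin n)),
        x ^ permLen (psi k e) = x ^ (n - (k:ℕ)) * x ^ permLen e := by
      intro k e; rw [permLen_psi, pow_add]
    rw [Fintype.sum_prod_type]
    simp only [hsplit]
    rw [← Finset.sum_mul_sum]
    have h1 : ∑ k : Fin (n+1), x ^ (n - (k:ℕ)) = qnat x (n+1) := by
      rw [Fin.sum_univ_eq_sum_range (fun i => x ^ (n - i)) (n+1), qnat]
      have := Finset.sum_range_reflect (fun j => x ^ j) (n+1)
      simpa using this
    rw [h1, ih, qfact, qfact, Finset.prod_range_succ, mul_comm]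

section Hecke
variable {K : Type*} [Field K] {q : K} {n : ℕ}
  {A : Type*} [Ring A] [Algebra K A] {T : Equiv.Perm (Fin n) → A}

lemma e_mul_Ts (hq0 : q ≠ 0)
    (hmul : ∀ (w : Equiv.Perm (Fin n)) (i j : Fin n), (i : ℕ) + 1 = j →
      T w * T (Equiv.swap i j) =
        if permLen (w * Equiv.swap i j) = permLen w + 1 then T (w * Equiv.swap i j)
        else (q - 1) • T w + q • T (w * Equiv.swap i j))
    {i j : Fin n} (hij : (i:ℕ) + 1 = j) :
    (∑ w : Equiv.Perm (Fin n), ((-q)⁻¹) ^ permLen w • T w) * T (Equiv.swap i j)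
      = -∑ w : Equiv.Perm (Fin n), ((-q)⁻¹) ^ permLen w • T w := by
  classical
  set s : Equiv.Perm (Fin n) := Equiv.swap i j with hs
  have hinej : i ≠ j := fun h => by rw [h] at hij; omega
  have hss : s * s = 1 := by rw [hs, Equiv.swap_mul_self]
  set a : Equiv.Perm (Fin n) → K := fun w => ((-q)⁻¹) ^ permLen w with ha
  set F : Equiv.Perm (Fin n) → A := fun w => a w • (T w * T s) + a w • T w with hF
  have hq1 : q * (-q)⁻¹ = -1 := by
    rw [inv_neg, mul_neg, mul_inv_cancel₀ hq0]
  have pair : ∀ w : Equiv.Perm (Fin n), w i < w j → F w + F (w * s) = 0 := by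
    intro w hw
    have hlen : permLen (w * s) = permLen w + 1 := permLen_mul_swap_of_lt hij hw
    have hTws : T w * T s = T (w * s) := by
      rw [hmul w i j hij, if_pos hlen]
    have hws2 : w * s * s = w := by rw [mul_assoc, hss, mul_one]
    have hTws2 : T (w * s) * T s = (q - 1) • T (w * s) + q • T w := by
      rw [hmul (w * s) i j hij, if_neg, hws2]
      rw [hws2, hlen]; omega
    have hav : a (w * s) = (-q)⁻¹ * a w := by
      simp only [ha, hlen, pow_succ]; ring
    rw [hF]
    simp only [hTws, hTws2, hav]
    match_scalars
    all_goals linear_combination a w * hq1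
  have key : ∑ w : Equiv.Perm (Fin n), F w = 0 := by
    apply Finset.sum_ninvolution (g := fun w => w * s)
    · intro w
      rcases (lt_or_gt_of_ne (fun h : w i = w j => hinej (w.injective h))) with h | h
      · exact pair w h
      · have h2 : (w * s) i < (w * s) j := by
          simpa [Equiv.Perm.mul_apply, hs, Equiv.swap_apply_left, Equiv.swap_apply_right] using h
        have := pair (w * s) h2
        rw [mul_assoc, hss, mul_one, add_comm] at this
        exact this
    · intro w _ hcon
      have h2 : w (s i) = w i := by rw [← Equiv.Perm.mul_apply, hcon]
      have h3 : s i = i := w.injective h2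
      rw [hs, Equiv.swap_apply_left] at h3
      exact hinej h3.symm
    · intro w; exact mem_univ _
    · intro w; rw [mul_assoc, hss, mul_one]
  have expand : (∑ w : Equiv.Perm (Fin n), a w • T w) * T s
      + ∑ w : Equiv.Perm (Fin n), a w • T w = 0 := by
    rw [Finset.sum_mul, ← Finset.sum_add_distrib]
    simpa only [smul_mul_assoc] using key
  linear_combination (norm := noncomm_ring) expand

lemma e_mul_Tw (hq0 : q ≠ 0) (hone : T 1 = 1)
    (hmul : ∀ (w : Equiv.Perm (Fin n)) (i j : Fin n), (i : ℕ) + 1 = j →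
      T w * T (Equiv.swap i j) =
        if permLen (w * Equiv.swap i j) = permLen w + 1 then T (w * Equiv.swap i j)
        else (q - 1) • T w + q • T (w * Equiv.swap i j))
    (w : Equiv.Perm (Fin n)) :
    (∑ u : Equiv.Perm (Fin n), ((-q)⁻¹) ^ permLen u • T u) * T w
      = ((-1 : K) ^ permLen w) • ∑ u : Equiv.Perm (Fin n), ((-q)⁻¹) ^ permLen u • T u := by
  classical
  set e : A := ∑ u : Equiv.Perm (Fin n), ((-q)⁻¹) ^ permLen u • T u with he
  have main : ∀ k : ℕ, ∀ w : Equiv.Perm (Fin n), permLen w ≤ k →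
      e * T w = ((-1 : K) ^ permLen w) • e := by
    intro k
    induction k with
    | zero =>
      intro w hw
      rcases eq_or_ne w 1 with rfl | hne
      · rw [hone, mul_one, permLen_one, pow_zero, one_smul]
      · obtain ⟨i, j, hij, hd⟩ := exists_descent hne
        have := permLen_mul_swap_of_gt hij hd
        omega
    | succ k ih =>
      intro w hw
      rcases eq_or_ne w 1 with rfl | hne
      · rw [hone, mul_one, permLen_one, pow_zero, one_smul]
      · obtain ⟨i, j, hij, hd⟩ := exists_descent hne
        set v := w * Equiv.swap i j with hv
        have hlen : permLen w = permLen v + 1 := permLen_mul_swap_of_gt hij hd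
        have hvs : v * Equiv.swap i j = w := by
          rw [hv, mul_assoc, Equiv.swap_mul_self, mul_one]
        have hTv : T v * T (Equiv.swap i j) = T w := by
          rw [hmul v i j hij, hvs, if_pos (by omega)]
        have hev : e * T v = ((-1 : K) ^ permLen v) • e := ih v (by omega)
        calc e * T w = (e * T v) * T (Equiv.swap i j) := by rw [mul_assoc, hTv]
          _ = ((-1 : K) ^ permLen v) • (e * T (Equiv.swap i j)) := by
              rw [hev, smul_mul_assoc]
          _ = ((-1 : K) ^ permLen v) • (-e) := by rw [e_mul_Ts hq0 hmul hij]
          _ = ((-1 : K) ^ permLen w) • e := by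
              rw [hlen, pow_succ, smul_neg, mul_smul]
              simp
  exact main (permLen w) w le_rfl

end Hecke

/-- in the Hecke algebra `H_{n,q}` — modelled as an algebra `A` with a
basis `{T_w : w ∈ S_n}` satisfying `T_1 = 1` and the usual multiplication rule —
the element `y_n = ([n]_{1/q}!)⁻¹ Σ_w (-q)^{-ℓ(w)} T_w` is an idempotent,
provided `q` and `[n]_{1/q}!` are invertible. -/
theorem stmt_3 {K : Type*} [Field K] (q : K) (hq0 : q ≠ 0) (n : ℕ)
    {A : Type*} [Ring A] [Algebra K A]
    (T : Equiv.Perm (Fin n) → A)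
    (hbasis : LinearIndependent K T)
    (hone : T 1 = 1)
    (hmul : ∀ (w : Equiv.Perm (Fin n)) (i j : Fin n), (i : ℕ) + 1 = j →
      T w * T (Equiv.swap i j) =
        if permLen (w * Equiv.swap i j) = permLen w + 1 then T (w * Equiv.swap i j)
        else (q - 1) • T w + q • T (w * Equiv.swap i j))
    (hfact : qfact q⁻¹ n ≠ 0) :
    ((qfact q⁻¹ n)⁻¹ • ∑ w : Equiv.Perm (Fin n), ((-q)⁻¹) ^ permLen w • T w) *
        ((qfact q⁻¹ n)⁻¹ • ∑ w : Equiv.Perm (Fin n), ((-q)⁻¹) ^ permLen w • T w) =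
      (qfact q⁻¹ n)⁻¹ • ∑ w : Equiv.Perm (Fin n), ((-q)⁻¹) ^ permLen w • T w := by
  classical
  set e : A := ∑ w : Equiv.Perm (Fin n), ((-q)⁻¹) ^ permLen w • T w with he
  have hee : e * e = (qfact q⁻¹ n) • e := by
    calc e * e = ∑ w : Equiv.Perm (Fin n), ((-q)⁻¹) ^ permLen w • (e * T w) := by
          rw [he, Finset.mul_sum]
          exact Finset.sum_congr rfl fun w _ => (mul_smul_comm _ _ _)
      _ = ∑ w : Equiv.Perm (Fin n), ((-q)⁻¹) ^ permLen w • (((-1 : K) ^ permLen w) • e) := by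
          exact Finset.sum_congr rfl fun w _ => by rw [e_mul_Tw hq0 hone hmul w]
      _ = ∑ w : Equiv.Perm (Fin n), (q⁻¹ ^ permLen w) • e := by
          refine Finset.sum_congr rfl fun w _ => ?_
          rw [smul_smul, ← mul_pow]
          congr 2
          rw [inv_neg]; ring
      _ = (∑ w : Equiv.Perm (Fin n), q⁻¹ ^ permLen w) • e := by
          rw [← Finset.sum_smul]
      _ = (qfact q⁻¹ n) • e := by rw [poincare q⁻¹ n]
  rw [smul_mul_smul_comm, hee, smul_smul]
  congr 1
  field_simp
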